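/- Let V_{2^N} = 2K_{2^{N+1}−1} − K_{2^N−1} be the de la Vallée Poussin kernel on 𝕋, where K_n is the Fejér kernel of order n, and set f = V_{2^N} ⊗ ⋯ ⊗ V_{2^N} (d-fold tensor product) on 𝕋^d. Then for every r > 0, ∫_{𝕋^d} |f| log^r(1+|f|) ≤ C_{r,d} N^r for some constant C_{r,d} depending only on r and d (for N large). -/

import Mathlib

open MeasureTheory
noncomputable section

/-- The (normalized) measure on the `d`-torus, modelled as `[0,1)^d ⊆ ℝ^d`. -/
def boxMeasure (d : ℕ) : Measure (Fin d → ℝ) :=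
  Measure.pi fun _ => MeasureTheory.volume.restrict (Set.Ico (0:ℝ) 1)

/-- The Fejér kernel of order `n` on `𝕋`. -/
def fejer (n : ℕ) (x : ℝ) : ℂ :=
  ∑ j ∈ Finset.Icc (-(n : ℤ)) (n : ℤ),
    (((1 : ℝ) - |(j : ℝ)| / (n + 1)) : ℂ) * Complex.exp (2 * Real.pi * Complex.I * j * x)

/-- The de la Vallée Poussin kernel `V_{2^N} = 2K_{2^{N+1}−1} − K_{2^N−1}`. -/
def vdp (N : ℕ) (x : ℝ) : ℂ := 2 * fejer (2 ^ (N + 1) - 1) x - fejer (2 ^ N - 1) x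

open Finset

lemma key' (z : ℂ) (hz : z ≠ 0) (N : ℕ) :
    (∑ j ∈ range N, z ^ (j:ℤ)) * (∑ k ∈ range N, z ^ (-(k:ℤ)))
    = ∑ m ∈ Finset.Icc (-(N:ℤ)) (N:ℤ), (((N:ℤ) - |m| : ℤ) : ℂ) * z ^ m := by
  induction N with
  | zero => simp
  | succ n ih =>
    have cross : (∑ j ∈ range n, z ^ (j:ℤ)) * z ^ (-(n:ℤ))
        + z ^ (n:ℤ) * (∑ k ∈ range n, z ^ (-(k:ℤ))) + 1
        = ∑ m ∈ Finset.Icc (-(n:ℤ)) (n:ℤ), z ^ m := by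
      have h1 : (∑ j ∈ range n, z ^ (j:ℤ)) * z ^ (-(n:ℤ))
          = ∑ m ∈ Finset.Icc (-(n:ℤ)) (-1), z ^ m := by
        rw [Finset.sum_mul]
        refine Finset.sum_nbij' (fun j => (j:ℤ) - n) (fun m => (m + n).toNat) ?_ ?_ ?_ ?_ ?_
        · intro a ha; simp only [Finset.mem_range] at ha; simp; omega
        · intro a ha; simp only [Finset.mem_Icc] at ha; simp; omega
        · intro a ha; simp only [Finset.mem_range] at ha
          show ((a:ℤ) - n + n).toNat = a; omega
        · intro a ha; simp only [Finset.mem_Icc] at ha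
          show ((a + n).toNat : ℤ) - n = a; omega
        · intro a ha; rw [← zpow_add₀ hz]; ring_nf
      have h2 : z ^ (n:ℤ) * (∑ k ∈ range n, z ^ (-(k:ℤ)))
          = ∑ m ∈ Finset.Icc (1:ℤ) (n:ℤ), z ^ m := by
        rw [Finset.mul_sum]
        refine Finset.sum_nbij' (fun k => (n:ℤ) - k) (fun m => (n - m).toNat) ?_ ?_ ?_ ?_ ?_
        · intro a ha; simp only [Finset.mem_range] at ha; simp; omega
        · intro a ha; simp only [Finset.mem_Icc] at ha; simp; omega
        · intro a ha; simp only [Finset.mem_range] at ha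
          show ((n:ℤ) - ((n:ℤ) - a)).toNat = a; omega
        · intro a ha; simp only [Finset.mem_Icc] at ha
          show (n:ℤ) - ((n - a).toNat : ℤ) = a; omega
        · intro a ha; rw [← zpow_add₀ hz]; ring_nf
      rw [h1, h2]
      have hsplit : Finset.Icc (-(n:ℤ)) (n:ℤ)
          = (Finset.Icc (-(n:ℤ)) (-1) ∪ {0}) ∪ Finset.Icc (1:ℤ) (n:ℤ) := by
        ext m; simp; omega
      rw [hsplit, Finset.sum_union, Finset.sum_union]
      · simp; ring
      · simp
      · rw [Finset.disjoint_left]; intro a ha; simp at ha ⊢; omega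
    rw [Finset.sum_range_succ, Finset.sum_range_succ,
      show ((n+1 : ℕ) : ℤ) = (n:ℤ)+1 by push_cast; ring]
    have hsub : Finset.Icc (-(n:ℤ)) (n:ℤ) ⊆ Finset.Icc (-((n:ℤ)+1)) ((n:ℤ)+1) := by
      intro m hm; simp only [Finset.mem_Icc] at *; omega
    have hRHS : ∑ m ∈ Finset.Icc (-((n:ℤ)+1)) ((n:ℤ)+1), (((n:ℤ)+1 - |m| : ℤ) : ℂ) * z^m
        = ∑ m ∈ Finset.Icc (-(n:ℤ)) (n:ℤ), (((n:ℤ)+1 - |m| : ℤ) : ℂ) * z^m := by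
      refine (Finset.sum_subset hsub ?_).symm
      intro m hm hnm
      simp only [Finset.mem_Icc] at hm hnm
      have hc : (n:ℤ)+1 - |m| = 0 := by
        rcases le_or_gt 0 m with h | h
        · rw [abs_of_nonneg h]; omega
        · rw [abs_of_neg h]; omega
      rw [hc]; simp
    have hsplit2 : ∑ m ∈ Finset.Icc (-(n:ℤ)) (n:ℤ), (((n:ℤ)+1 - |m| : ℤ) : ℂ) * z^m
        = (∑ m ∈ Finset.Icc (-(n:ℤ)) (n:ℤ), (((n:ℤ) - |m| : ℤ) : ℂ) * z^m)
          + ∑ m ∈ Finset.Icc (-(n:ℤ)) (n:ℤ), z^m := by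
      rw [← Finset.sum_add_distrib]
      refine Finset.sum_congr rfl fun m _ => ?_
      push_cast; ring
    rw [hRHS, hsplit2, ← ih, ← cross]
    have hzn : z ^ (n:ℤ) * z ^ (-(n:ℤ)) = 1 := by
      rw [← zpow_add₀ hz]; simp
    set a := z ^ (n:ℤ); set b := z ^ (-(n:ℤ))
    set A := ∑ j ∈ range n, z ^ (j:ℤ); set B := ∑ k ∈ range n, z ^ (-(k:ℤ))
    linear_combination hzn

lemma fejer_eq_ofReal (n : ℕ) (x : ℝ) : fejer n x =
    ((((n:ℝ)+1)⁻¹ *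
      ‖∑ j ∈ Finset.range (n+1), Complex.exp (2*Real.pi*Complex.I*j*x)‖^2 : ℝ) : ℂ) := by
  set z : ℂ := Complex.exp (2*Real.pi*Complex.I*x) with hzdef
  have hz : z ≠ 0 := Complex.exp_ne_zero _
  have hze : ∀ j : ℤ, Complex.exp (2*Real.pi*Complex.I*j*x) = z ^ j := by
    intro j
    rw [hzdef, ← Complex.exp_int_mul]
    congr 1; ring
  have hA : (∑ j ∈ Finset.range (n+1), Complex.exp (2*Real.pi*Complex.I*j*x))
      = ∑ j ∈ range (n+1), z ^ (j:ℤ) := by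
    refine Finset.sum_congr rfl fun j _ => ?_
    rw [← hze j]; norm_num
  have hconjz : (starRingEnd ℂ) z = z⁻¹ := by
    rw [hzdef, ← Complex.exp_conj, ← Complex.exp_neg]
    congr 1
    simp [Complex.ext_iff]
  have hconj : (starRingEnd ℂ) (∑ j ∈ range (n+1), z ^ (j:ℤ))
      = ∑ k ∈ range (n+1), z ^ (-(k:ℤ)) := by
    rw [map_sum]
    refine Finset.sum_congr rfl fun k _ => ?_
    rw [map_zpow₀, hconjz, inv_zpow, ← zpow_neg]
  have hsub : Finset.Icc (-(n:ℤ)) (n:ℤ) ⊆ Finset.Icc (-((n+1:ℕ):ℤ)) ((n+1:ℕ):ℤ) := by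
    intro m hm; simp only [Finset.mem_Icc] at *; omega
  have hmul : ((n:ℂ)+1) * fejer n x
      = ∑ m ∈ Finset.Icc (-((n+1:ℕ):ℤ)) ((n+1:ℕ):ℤ), ((((n+1:ℕ):ℤ) - |m| : ℤ) : ℂ) * z ^ m := by
    rw [fejer, Finset.mul_sum]
    calc ∑ i ∈ Finset.Icc (-(n:ℤ)) (n:ℤ),
            ((n:ℂ)+1) * ((((1 : ℝ) - |(i : ℝ)| / (n + 1)) : ℂ)
              * Complex.exp (2 * Real.pi * Complex.I * i * x))
        = ∑ i ∈ Finset.Icc (-(n:ℤ)) (n:ℤ), ((((n+1:ℕ):ℤ) - |i| : ℤ) : ℂ) * z ^ i := by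
          refine Finset.sum_congr rfl fun j hj => ?_
          rw [hze j, ← mul_assoc]
          congr 1
          have hn1 : ((n:ℂ)+1) ≠ 0 := Nat.cast_add_one_ne_zero n
          push_cast
          field_simp
          norm_cast
      _ = ∑ m ∈ Finset.Icc (-((n+1:ℕ):ℤ)) ((n+1:ℕ):ℤ), ((((n+1:ℕ):ℤ) - |m| : ℤ) : ℂ) * z ^ m := by
          refine Finset.sum_subset hsub ?_
          intro m hm hnm
          simp only [Finset.mem_Icc] at hm hnm
          have hc : ((n+1:ℕ):ℤ) - |m| = 0 := by
            rcases le_or_gt 0 m with h | h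
            · rw [abs_of_nonneg h]; omega
            · rw [abs_of_neg h]; omega
          rw [hc]; simp
  have hnorm : (∑ j ∈ range (n+1), z ^ (j:ℤ)) * (starRingEnd ℂ) (∑ j ∈ range (n+1), z ^ (j:ℤ))
      = ((‖∑ j ∈ range (n+1), z ^ (j:ℤ)‖^2 : ℝ) : ℂ) := by
    rw [Complex.mul_conj, Complex.normSq_eq_norm_sq]
  have hkey := key' z hz (n+1)
  rw [← hconj, hnorm] at hkey
  have hne : ((n:ℂ)+1) ≠ 0 := Nat.cast_add_one_ne_zero n
  rw [hA, Complex.ofReal_mul, Complex.ofReal_inv]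
  push_cast
  rw [eq_inv_mul_iff_mul_eq₀ hne, hmul, ← hkey]
  norm_cast

abbrev μ₀ : Measure ℝ := MeasureTheory.volume.restrict (Set.Ico (0:ℝ) 1)

instance : IsProbabilityMeasure μ₀ := ⟨by simp⟩

lemma continuous_fejer (n : ℕ) : Continuous (fejer n) := by
  unfold fejer
  refine continuous_finset_sum _ fun j _ => Continuous.mul continuous_const ?_
  exact Complex.continuous_exp.comp (by fun_prop)

lemma integral_char (j : ℤ) :
    ∫ y, Complex.exp (2*Real.pi*Complex.I*j*y) ∂μ₀ = if j = 0 then 1 else 0 := by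
  have hIoc : ∫ y, Complex.exp (2*Real.pi*Complex.I*j*y) ∂μ₀
      = ∫ y in (0:ℝ)..1, Complex.exp (2*Real.pi*Complex.I*j*y) := by
    rw [intervalIntegral.integral_of_le zero_le_one]
    rw [MeasureTheory.integral_Ico_eq_integral_Ioo, MeasureTheory.integral_Ioc_eq_integral_Ioo]
  rw [hIoc]
  rcases eq_or_ne j 0 with h | h
  · simp [h]
  · rw [if_neg h]
    have hc : (2*(Real.pi:ℂ)*Complex.I*j) ≠ 0 := by
      have hπ : (Real.pi:ℂ) ≠ 0 := by exact_mod_cast Real.pi_ne_zero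
      have hj : (j:ℂ) ≠ 0 := Int.cast_ne_zero.mpr h
      exact mul_ne_zero (mul_ne_zero (mul_ne_zero two_ne_zero hπ) Complex.I_ne_zero) hj
    rw [integral_exp_mul_complex hc]
    have h1 : (2*(Real.pi:ℂ)*Complex.I*j) * (1:ℝ) = j * (2*Real.pi*Complex.I) := by
      push_cast; ring
    have h0 : (2*(Real.pi:ℂ)*Complex.I*j) * ((0:ℝ):ℂ) = 0 := by push_cast; ring
    rw [h1, h0, Complex.exp_int_mul_two_pi_mul_I, Complex.exp_zero, sub_self, zero_div]

lemma integrableOn_of_continuous {f : ℝ → ℂ} (hf : Continuous f) : Integrable f μ₀ :=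
  (hf.continuousOn.integrableOn_compact isCompact_Icc).mono_set Set.Ico_subset_Icc_self

lemma integrable_char (j : ℤ) :
    Integrable (fun y : ℝ => Complex.exp (2*Real.pi*Complex.I*j*y)) μ₀ :=
  integrableOn_of_continuous (Complex.continuous_exp.comp (by fun_prop))

lemma integral_fejer (n : ℕ) : ∫ y, fejer n y ∂μ₀ = 1 := by
  unfold fejer
  rw [MeasureTheory.integral_finset_sum]
  · rw [Finset.sum_eq_single 0]
    · simp [integral_smul, MeasureTheory.integral_const_mul, integral_char]
    · intro j hj hj0
      rw [MeasureTheory.integral_const_mul, integral_char, if_neg hj0, mul_zero]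
    · intro h; simp at h
  · intro j _
    exact (integrable_char j).const_mul _

lemma norm_fejer_eq_re (n : ℕ) (x : ℝ) : ‖fejer n x‖ = (fejer n x).re := by
  rw [fejer_eq_ofReal]
  rw [Complex.norm_real, Complex.ofReal_re]
  exact abs_of_nonneg (by positivity)

lemma integral_norm_fejer (n : ℕ) : ∫ y, ‖fejer n y‖ ∂μ₀ = 1 := by
  have hint : Integrable (fejer n) μ₀ := integrableOn_of_continuous (continuous_fejer n)
  calc ∫ y, ‖fejer n y‖ ∂μ₀ = ∫ y, RCLike.re (fejer n y) ∂μ₀ := by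
        simp only [RCLike.re_eq_complex_re]
        exact MeasureTheory.integral_congr_ae (.of_forall fun y => norm_fejer_eq_re n y)
    _ = RCLike.re (∫ y, fejer n y ∂μ₀) := _root_.integral_re hint
    _ = 1 := by rw [integral_fejer]; simp

lemma integral_pi_prod (f : ℝ → ℝ) (d : ℕ) :
    ∫ x : Fin d → ℝ, ∏ j, f (x j) ∂(Measure.pi fun _ => μ₀) = (∫ y, f y ∂μ₀) ^ d := by
  induction d with
  | zero =>
      rw [Measure.pi_of_empty]
      simp
  | succ n ih =>
      have hmp := MeasureTheory.measurePreserving_piFinSuccAbove (fun _ : Fin (n+1) => μ₀) 0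
      have hemb := (MeasurableEquiv.piFinSuccAbove (fun _ : Fin (n+1) => ℝ) 0).measurableEmbedding
      set g : ℝ × (Fin n → ℝ) → ℝ := fun p => f p.1 * ∏ j, f (p.2 j) with hg
      have hcomp : ∀ x : Fin (n+1) → ℝ,
          g ((MeasurableEquiv.piFinSuccAbove (fun _ : Fin (n+1) => ℝ) 0) x)
          = ∏ j, f (x j) := by
        intro x
        rw [Fin.prod_univ_succ]
        simp [hg, MeasurableEquiv.piFinSuccAbove_apply, Fin.insertNthEquiv, Fin.removeNth,
          Fin.zero_succAbove]
        exact Or.inl rfl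
      calc ∫ x : Fin (n+1) → ℝ, ∏ j, f (x j) ∂(Measure.pi fun _ => μ₀)
          = ∫ x : Fin (n+1) → ℝ,
              g ((MeasurableEquiv.piFinSuccAbove (fun _ : Fin (n+1) => ℝ) 0) x)
              ∂(Measure.pi fun _ => μ₀) := by simp_rw [hcomp]
        _ = ∫ p, g p ∂(μ₀.prod (Measure.pi fun _ : Fin n => μ₀)) := hmp.integral_comp hemb g
        _ = (∫ y, f y ∂μ₀) * ∫ x : Fin n → ℝ, ∏ j, f (x j) ∂(Measure.pi fun _ => μ₀) :=
            MeasureTheory.integral_prod_mul f (fun z : Fin n → ℝ => ∏ j, f (z j))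
        _ = (∫ y, f y ∂μ₀) ^ (n+1) := by rw [ih, pow_succ]; ring

lemma continuous_vdp (N : ℕ) : Continuous (vdp N) := by
  unfold vdp
  exact (continuous_const.mul (continuous_fejer _)).sub (continuous_fejer _)

lemma norm_fejer_le (n : ℕ) (x : ℝ) : ‖fejer n x‖ ≤ 2*n+1 := by
  unfold fejer
  refine (norm_sum_le _ _).trans ?_
  have hterm : ∀ j ∈ Finset.Icc (-(n:ℤ)) (n:ℤ),
      ‖(((1 : ℝ) - |(j : ℝ)| / (n + 1)) : ℂ) * Complex.exp (2 * Real.pi * Complex.I * j * x)‖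
        ≤ 1 := by
    intro j hj
    simp only [Finset.mem_Icc] at hj
    rw [norm_mul]
    have h1 : ‖Complex.exp (2 * Real.pi * Complex.I * j * x)‖ = 1 := by
      rw [show (2 * (Real.pi:ℂ) * Complex.I * j * x) = ((2 * Real.pi * j * x : ℝ) : ℂ) * Complex.I
        by push_cast; ring]
      rw [Complex.norm_exp_ofReal_mul_I]
    rw [h1, mul_one]
    rw [show (((1 : ℝ) - |(j : ℝ)| / (n + 1)) : ℂ)
        = ((((1:ℝ) - |(j:ℝ)|/((n:ℝ)+1)) : ℝ) : ℂ) by push_cast; ring,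
      Complex.norm_real, Real.norm_eq_abs]
    have hja : |(j:ℝ)| = ((|j| : ℤ) : ℝ) := by push_cast; rfl
    have hd : |(j:ℝ)| / ((n:ℝ) + 1) ≤ 1 := by
      rw [div_le_one (by positivity), hja]
      exact_mod_cast (abs_le.mpr ⟨by omega, by omega⟩ : |j| ≤ (n:ℤ) + 1)
    have hd0 : 0 ≤ |(j:ℝ)| / ((n:ℝ) + 1) := by positivity
    rw [abs_of_nonneg (by linarith)]
    linarith
  refine (Finset.sum_le_sum hterm).trans ?_
  rw [Finset.sum_const, nsmul_eq_mul, mul_one]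
  have : (Finset.Icc (-(n:ℤ)) (n:ℤ)).card = 2*n+1 := by
    rw [Int.card_Icc]
    omega
  rw [this]
  push_cast
  linarith

lemma norm_fejer_pow_le (k : ℕ) (x : ℝ) : ‖fejer (2^k - 1) x‖ ≤ 2^(k+1) := by
  refine (norm_fejer_le _ x).trans ?_
  have h1 : (1:ℕ) ≤ 2^k := Nat.one_le_two_pow
  have : ((2^k - 1 : ℕ) : ℝ) = (2:ℝ)^k - 1 := by
    push_cast [h1]; ring
  rw [this]
  rw [pow_succ]
  ring_nf
  linarith

lemma norm_vdp_le (N : ℕ) (x : ℝ) : ‖vdp N x‖ ≤ 2^(N+4) := by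
  unfold vdp
  refine (norm_sub_le _ _).trans ?_
  rw [norm_mul]
  have h1 := norm_fejer_pow_le (N+1) x
  have h2 := norm_fejer_pow_le N x
  have : ‖(2:ℂ)‖ = 2 := by norm_num
  rw [this]
  have hp0 : (0:ℝ) ≤ 2^N := by positivity
  have e1 : (2:ℝ)^(N+1+1) = 4*2^N := by ring
  have e2 : (2:ℝ)^(N+1) = 2*2^N := by ring
  have e3 : (2:ℝ)^(N+4) = 16*2^N := by ring
  linarith

lemma integral_norm_vdp_le (N : ℕ) : ∫ y, ‖vdp N y‖ ∂μ₀ ≤ 3 := by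
  have hi1 : Integrable (fun y => ‖fejer (2 ^ (N + 1) - 1) y‖) μ₀ :=
    (integrableOn_of_continuous (continuous_fejer _)).norm
  have hi2 : Integrable (fun y => ‖fejer (2 ^ N - 1) y‖) μ₀ :=
    (integrableOn_of_continuous (continuous_fejer _)).norm
  have hle : ∫ y, ‖vdp N y‖ ∂μ₀
      ≤ ∫ y, (2 * ‖fejer (2 ^ (N + 1) - 1) y‖ + ‖fejer (2 ^ N - 1) y‖) ∂μ₀ := by
    refine integral_mono ((integrableOn_of_continuous (continuous_vdp N)).norm) ?_ ?_
    · exact ((hi1.const_mul 2).add hi2)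
    · intro y
      simp only [vdp]
      refine (norm_sub_le _ _).trans ?_
      rw [norm_mul]
      simp
  refine hle.trans ?_
  rw [integral_add (hi1.const_mul 2) hi2, integral_const_mul, integral_norm_fejer,
    integral_norm_fejer]
  norm_num

instance (d : ℕ) : IsProbabilityMeasure (boxMeasure d) :=
  inferInstanceAs (IsProbabilityMeasure (Measure.pi fun _ : Fin d => μ₀))


/-- The `L log^r L` norm of the tensor de la Vallée Poussin kernel grows like `N^r`. -/
theorem vdp_LlogL_bound (d : ℕ) (hd : 0 < d) (r : ℝ) (hr : 0 < r) :
    ∃ C > 0, ∀ N : ℕ, 1 ≤ N →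
      ∫ x, ‖∏ j : Fin d, vdp N (x j)‖ *
          Real.log (1 + ‖∏ j : Fin d, vdp N (x j)‖) ^ r ∂(boxMeasure d) ≤
        C * (N : ℝ) ^ r := by
  have hd' : (1:ℝ) ≤ d := by exact_mod_cast hd
  refine ⟨3^d * (6*d : ℝ)^r, by positivity, fun N hN => ?_⟩
  have hN' : (1:ℝ) ≤ N := by exact_mod_cast hN
  set P : (Fin d → ℝ) → ℝ := fun x => ∏ j, ‖vdp N (x j)‖ with hP
  have hPnonneg : ∀ x, 0 ≤ P x := fun x => Finset.prod_nonneg fun j _ => norm_nonneg _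
  have hPbound : ∀ x, P x ≤ ((2:ℝ)^(N+4))^d := by
    intro x
    rw [show ((2:ℝ)^(N+4))^d = ∏ _j : Fin d, (2:ℝ)^(N+4) by rw [Finset.prod_const]; simp]
    exact Finset.prod_le_prod (fun j _ => norm_nonneg _) (fun j _ => norm_vdp_le N (x j))
  have hBpos : (0:ℝ) < 6*N*d := by positivity
  have hlog : ∀ x, Real.log (1 + P x) ≤ 6*(N:ℝ)*d := by
    intro x
    have h1 : 1 + P x ≤ (2:ℝ)^(6*N*d) := by
      have h2 : ((2:ℝ)^(N+4))^d = (2:ℝ)^((N+4)*d) := by rw [← pow_mul]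
      have h3 : (1:ℝ) + 2^((N+4)*d) ≤ 2^((N+4)*d) + 2^((N+4)*d) := by
        have : (1:ℝ) ≤ 2^((N+4)*d) := one_le_pow₀ (by norm_num)
        linarith
      have h4 : (2:ℝ)^((N+4)*d) + 2^((N+4)*d) = 2^((N+4)*d + 1) := by ring
      have h5 : (2:ℝ)^((N+4)*d + 1) ≤ 2^(6*N*d) := by
        apply pow_le_pow_right₀ (by norm_num)
        nlinarith [hN, hd]
      have := hPbound x
      rw [h2] at this
      linarith
    have h6 : Real.log (1 + P x) ≤ Real.log ((2:ℝ)^(6*N*d)) := by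
      have hpos : (0:ℝ) < 1 + P x := by have := hPnonneg x; linarith
      gcongr
    refine h6.trans ?_
    rw [Real.log_pow]
    have hl2 : Real.log 2 ≤ 1 := by
      have := Real.log_two_lt_d9
      linarith
    calc ((6*N*d : ℕ) : ℝ) * Real.log 2 ≤ ((6*N*d : ℕ) : ℝ) * 1 := by
          apply mul_le_mul_of_nonneg_left hl2 (by positivity)
      _ = 6*(N:ℝ)*d := by push_cast; ring
  have hPcont : Continuous P :=
    continuous_finset_prod _ fun j _ => ((continuous_vdp N).norm).comp (continuous_apply j)
  have hPint : Integrable P (boxMeasure d) := by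
    refine Integrable.mono' (integrable_const (((2:ℝ)^(N+4))^d)) hPcont.aestronglyMeasurable ?_
    refine Filter.Eventually.of_forall fun x => ?_
    rw [Real.norm_eq_abs, abs_of_nonneg (hPnonneg x)]
    exact hPbound x
  have hmono : ∫ x, ‖∏ j : Fin d, vdp N (x j)‖ *
      Real.log (1 + ‖∏ j : Fin d, vdp N (x j)‖) ^ r ∂(boxMeasure d)
      ≤ ∫ x, P x * (6*(N:ℝ)*d)^r ∂(boxMeasure d) := by
    refine integral_mono_of_nonneg ?_ (hPint.mul_const _) ?_
    · refine Filter.Eventually.of_forall fun x => ?_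
      have h1 : (0:ℝ) ≤ ‖∏ j : Fin d, vdp N (x j)‖ := norm_nonneg _
      have h2 : (0:ℝ) ≤ Real.log (1 + ‖∏ j : Fin d, vdp N (x j)‖) ^ r :=
        Real.rpow_nonneg (Real.log_nonneg (by linarith)) r
      exact mul_nonneg h1 h2
    · refine Filter.Eventually.of_forall fun x => ?_
      have hnp : ‖∏ j : Fin d, vdp N (x j)‖ = P x := norm_prod _ _
      simp only []
      rw [hnp]
      refine mul_le_mul_of_nonneg_left ?_ (hPnonneg x)
      refine Real.rpow_le_rpow (Real.log_nonneg (by have := hPnonneg x; linarith)) ?_ hr.le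
      exact hlog x
  refine hmono.trans ?_
  rw [MeasureTheory.integral_mul_const]
  have hipp : ∫ x, P x ∂(boxMeasure d) = (∫ y, ‖vdp N y‖ ∂μ₀) ^ d :=
    integral_pi_prod (fun y => ‖vdp N y‖) d
  have hintP : ∫ x, P x ∂(boxMeasure d) ≤ 3^d := by
    rw [hipp]
    exact pow_le_pow_left₀ (integral_nonneg fun y => norm_nonneg _) (integral_norm_vdp_le N) d
  have hBr : (6*(N:ℝ)*d)^r = (6*d : ℝ)^r * (N:ℝ)^r := by
    rw [show 6*(N:ℝ)*d = (6*d) * N by ring]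
    exact Real.mul_rpow (by positivity) (by positivity)
  calc (∫ x, P x ∂(boxMeasure d)) * (6*(N:ℝ)*d)^r
      ≤ 3^d * (6*(N:ℝ)*d)^r := by
        apply mul_le_mul_of_nonneg_right hintP (Real.rpow_nonneg (by positivity) r)
    _ = 3^d * (6*d : ℝ)^r * (N:ℝ)^r := by rw [hBr]; ring
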